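/- Let D ⊣ C : A ⇄ P be an adjunction between categories with pullbacks and σ : S → R a Galois descent morphism. Then the slice category Split_R(σ)/S_σ is equivalent to the full subcategory of A/S on those objects B_b such that the unit of the sliced adjunction D_S ⊣ C_S is an isomorphism at B_b, and hence Split_R(σ)/S_σ is equivalent to P/DS. -/

import Mathlib

open CategoryTheory Limits

section Aux

variable {A : Type*} [Category A] [HasPullbacks A] {S R : A} (σ : S ⟶ R)
variable {D : Type*} [Category D] {L : Over S ⥤ D} {Us : D ⥤ Over S}

/-- transfer `IsIso (unit.app ·)` along an isomorphism. -/
lemma stmt11_aux_transfer (adjS : L ⊣ Us) {X Y : Over S} (e : X ≅ Y)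
    (h : IsIso (adjS.unit.app X)) : IsIso (adjS.unit.app Y) := by
  have h2 : adjS.unit.app Y = e.inv ≫ adjS.unit.app X ≫ (L ⋙ Us).map e.hom := by
    rw [← adjS.unit.naturality e.hom]
    simp
  rw [h2]
  infer_instance

lemma stmt11_aux_unit_at_R (adjS : L ⊣ Us) (hc : IsIso adjS.counit) (X : D) :
    IsIso (adjS.unit.app (Us.obj X)) := by
  haveI := hc
  have tri := adjS.right_triangle_components X
  have : IsIso (adjS.unit.app (Us.obj X) ≫ Us.map (adjS.counit.app X)) := by
    rw [tri]
    exact inferInstanceAs (IsIso (𝟙 _))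
  exact IsIso.of_isIso_comp_right _ (Us.map (adjS.counit.app X))

/-- The key descent-free lemma: if the unit is an isomorphism at `T B` and `T (T B)`,
where `T = Over.map σ ⋙ Over.pullback σ`, then it is an isomorphism at `B`. -/
lemma stmt11_aux_key (adjS : L ⊣ Us) (hc : IsIso adjS.counit) (B : Over S)
    (hTB : IsIso (adjS.unit.app ((Over.map σ ⋙ Over.pullback σ).obj B)))
    (hT2 : IsIso (adjS.unit.app ((Over.map σ ⋙ Over.pullback σ).obj
      ((Over.map σ ⋙ Over.pullback σ).obj B)))) :
    IsIso (adjS.unit.app B) := by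
  haveI := hc
  haveI := hTB
  haveI := hT2
  let T : Over S ⥤ Over S := Over.map σ ⋙ Over.pullback σ
  let u : 𝟭 (Over S) ⟶ T := (Over.mapPullbackAdj σ).unit
  let uB : B ⟶ T.obj B := u.app B
  let uTB : T.obj B ⟶ T.obj (T.obj B) := u.app (T.obj B)
  -- inverse-naturality helper
  haveI hTB' : IsIso (adjS.unit.app (T.obj B)) := hTB
  haveI hT2' : IsIso (adjS.unit.app (T.obj (T.obj B))) := hT2
  have inv_nat : ∀ {X Y : Over S} (f : X ⟶ Y) [IsIso (adjS.unit.app X)]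
      [IsIso (adjS.unit.app Y)],
      inv (adjS.unit.app X) ≫ f = (L ⋙ Us).map f ≫ inv (adjS.unit.app Y) := by
    intro X Y f hX hY
    rw [IsIso.inv_comp_eq, ← Category.assoc]
    have hnat := adjS.unit.naturality f
    simp only [Functor.id_obj, Functor.id_map] at hnat
    rw [← hnat, Category.assoc, IsIso.hom_inv_id, Category.comp_id]
  set m : Us.obj (L.obj B) ⟶ T.obj B :=
    (L ⋙ Us).map uB ≫ inv (adjS.unit.app (T.obj B)) with hm
  have hE1 : adjS.unit.app B ≫ m = uB := by
    have hnat := adjS.unit.naturality uB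
    simp only [Functor.id_obj, Functor.id_map] at hnat
    rw [hm, ← Category.assoc, ← hnat, Category.assoc, IsIso.hom_inv_id, Category.comp_id]
  have huu : uB ≫ uTB = uB ≫ T.map uB := by
    have h0 := u.naturality (u.app B)
    simp only [Functor.id_obj, Functor.id_map] at h0
    exact h0
  have hE2 : m ≫ uTB = m ≫ T.map uB := by
    rw [hm, Category.assoc, Category.assoc, inv_nat uTB,
      inv_nat (T.map uB), ← Category.assoc, ← Category.assoc,
      ← Functor.map_comp, ← Functor.map_comp, huu]
  -- component computations
  have cu_fst : uB.left ≫ pullback.fst ((Over.map σ).obj B).hom σ = 𝟙 B.left := by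
    simp [uB, u, Over.mapPullbackAdj_unit_app]
    exact pullback.lift_fst _ _ _
  have cu_snd : uB.left ≫ pullback.snd ((Over.map σ).obj B).hom σ = B.hom := by
    simp [uB, u, Over.mapPullbackAdj_unit_app]
    exact pullback.lift_snd _ _ _
  have h4 : m.left ≫ pullback.fst ((Over.map σ).obj B).hom σ ≫ uB.left = m.left := by
    have h4' := congrArg (fun (t : Us.obj (L.obj B) ⟶ T.obj (T.obj B)) =>
      t.left ≫ pullback.fst ((Over.map σ).obj (T.obj B)).hom σ) hE2
    simp only [Over.comp_left, Category.assoc] at h4'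
    have e1 : uTB.left ≫ pullback.fst ((Over.map σ).obj (T.obj B)).hom σ = 𝟙 (T.obj B).left := by
      simp [uTB, u, Over.mapPullbackAdj_unit_app]
      exact pullback.lift_fst _ _ _
    have e2 : (T.map uB).left ≫ pullback.fst ((Over.map σ).obj (T.obj B)).hom σ
        = pullback.fst ((Over.map σ).obj B).hom σ ≫ uB.left := by
      show ((Over.pullback σ).map ((Over.map σ).map uB)).left ≫ _ = _
      simp [Over.pullback_map_left]
      exact pullback.lift_fst _ _ _
    rw [e1, e2, Category.comp_id] at h4'
    exact h4'.symm
  have pf : (m.left ≫ pullback.fst ((Over.map σ).obj B).hom σ) ≫ B.hom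
      = (Us.obj (L.obj B)).hom := by
    have h5 := congrArg (fun t => t ≫ pullback.snd ((Over.map σ).obj B).hom σ) h4
    simp only [Category.assoc, cu_snd] at h5
    rw [Category.assoc, h5]
    exact Over.w m
  let ℓ : Us.obj (L.obj B) ⟶ B :=
    Over.homMk (m.left ≫ pullback.fst ((Over.map σ).obj B).hom σ) pf
  have hℓ1 : adjS.unit.app B ≫ ℓ = 𝟙 B := by
    apply Over.OverMorphism.ext
    have h6 := congrArg (fun (t : B ⟶ T.obj B) => t.left) hE1
    simp only [Over.comp_left] at h6
    show (adjS.unit.app B).left ≫ m.left ≫ pullback.fst ((Over.map σ).obj B).hom σ = 𝟙 B.left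
    rw [← Category.assoc, h6, cu_fst]
  have hdup : adjS.unit.app (Us.obj (L.obj B)) = (L ⋙ Us).map (adjS.unit.app B) := by
    have t1 := adjS.right_triangle_components (L.obj B)
    have t2 : (L ⋙ Us).map (adjS.unit.app B) ≫ Us.map (adjS.counit.app (L.obj B)) = 𝟙 _ := by
      show Us.map (L.map (adjS.unit.app B)) ≫ Us.map (adjS.counit.app (L.obj B)) = 𝟙 _
      rw [← Us.map_comp, adjS.left_triangle_components B]
      simp
    rw [← cancel_mono (Us.map (adjS.counit.app (L.obj B))), t1, t2]
    rfl
  have hℓ2 : ℓ ≫ adjS.unit.app B = 𝟙 (Us.obj (L.obj B)) := by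
    have hn := adjS.unit.naturality ℓ
    simp only [Functor.id_obj, Functor.id_map] at hn
    rw [hn, hdup, ← Functor.map_comp, hℓ1]
    simp
  exact ⟨ℓ, hℓ1, hℓ2⟩

end Aux

lemma stmt11_aux_fsext {C : Type*} [Category C] {Z : ObjectProperty C}
    {X Y : ObjectProperty.FullSubcategory Z}
    {f g : X ⟶ Y} (hfg : f.hom = g.hom) : f = g := InducedCategory.hom_ext hfg

theorem stmt11 {A P : Type*} [Category A] [Category P] [HasPullbacks A] [HasPullbacks P]
    (F : A ⥤ P) (U : P ⥤ A) (adj : F ⊣ U) {S R : A} (σ : S ⟶ R)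
    (US : Over (F.obj S) ⥤ Over S)
    (adjS : (Over.post F : Over S ⥤ Over (F.obj S)) ⊣ US)
    [MonadicRightAdjoint (Over.pullback σ)]
    (hcounit : IsIso adjS.counit)
    (hsplit : ∀ X : Over (F.obj S),
      IsIso (adjS.unit.app ((Over.pullback σ).obj ((Over.map σ).obj (US.obj X))))) :
    ∃ h : IsIso (adjS.unit.app ((Over.pullback σ).obj (Over.mk σ))),
      Nonempty
        (Over (⟨Over.mk σ, h⟩ :
            ObjectProperty.FullSubcategory
              (fun Aa : Over R => IsIso (adjS.unit.app ((Over.pullback σ).obj Aa)))) ≌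
          ObjectProperty.FullSubcategory (fun Bb : Over S => IsIso (adjS.unit.app Bb))) ∧
      Nonempty
        (Over (⟨Over.mk σ, h⟩ :
            ObjectProperty.FullSubcategory
              (fun Aa : Over R => IsIso (adjS.unit.app ((Over.pullback σ).obj Aa)))) ≌
          Over (F.obj S)) := by
  classical
  haveI := hcounit
  haveI hUSff : US.Faithful := (adjS.fullyFaithfulROfIsIsoCounit).faithful
  haveI hUSfull : US.Full := (adjS.fullyFaithfulROfIsIsoCounit).full
  -- `US` of the terminal object is terminal
  have tFS : IsTerminal (Over.mk (𝟙 (F.obj S))) := Over.mkIdTerminal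
  have tUS : IsTerminal (US.obj (Over.mk (𝟙 (F.obj S)))) := by
    refine IsTerminal.ofUniqueHom (fun Z => (adjS.homEquiv Z _) (tFS.from _)) ?_
    intro Z m
    rw [← (adjS.homEquiv Z _).apply_symm_apply m]
    exact congrArg (adjS.homEquiv Z _) (tFS.hom_ext _ _)
  have iso₁ : Over.mk (𝟙 S) ≅ US.obj (Over.mk (𝟙 (F.obj S))) :=
    Over.mkIdTerminal.uniqueUpToIso tUS
  -- the main isomorphism witness `h`
  have hT1 : IsIso (adjS.unit.app
      ((Over.pullback σ).obj ((Over.map σ).obj (Over.mk (𝟙 S))))) :=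
    stmt11_aux_transfer adjS
      ((Over.map σ ⋙ Over.pullback σ).mapIso iso₁.symm) (hsplit _)
  have h : IsIso (adjS.unit.app ((Over.pullback σ).obj (Over.mk σ))) :=
    stmt11_aux_transfer adjS
      ((Over.pullback σ).mapIso
        (Over.isoMk (Iso.refl _) (by simp) :
          (Over.map σ).obj (Over.mk (𝟙 S)) ≅ Over.mk σ)) hT1
  -- the full subcategory of split objects over `R`, and the base object `S_σ`
  let pred : Over R → Prop := fun Aa => IsIso (adjS.unit.app ((Over.pullback σ).obj Aa))
  let Sσ : ObjectProperty.FullSubcategory pred := ⟨Over.mk σ, h⟩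
  -- the comparison functor `Over (F S) ⥤ Over S_σ`
  let Φ : Over (F.obj S) ⥤ Over Sσ :=
    { obj := fun X => Over.mk
        (show (⟨(Over.map σ).obj (US.obj X), hsplit X⟩ : ObjectProperty.FullSubcategory pred) ⟶ Sσ from
          ObjectProperty.homMk (Over.homMk (US.obj X).hom (by rfl)))
      map := fun {X Y} g => Over.homMk
        (show (⟨(Over.map σ).obj (US.obj X), hsplit X⟩ : ObjectProperty.FullSubcategory pred) ⟶
            ⟨(Over.map σ).obj (US.obj Y), hsplit Y⟩ from ObjectProperty.homMk ((Over.map σ).map (US.map g)))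
        (by
          apply stmt11_aux_fsext
          apply Over.OverMorphism.ext
          simp [ObjectProperty.FullSubcategory.comp_hom, ObjectProperty.FullSubcategory.id_hom])
      map_id := by
        intro X
        apply Over.OverMorphism.ext
        apply stmt11_aux_fsext
        apply Over.OverMorphism.ext
        simp [ObjectProperty.FullSubcategory.comp_hom, ObjectProperty.FullSubcategory.id_hom]
      map_comp := by
        intro X Y Z f g
        apply Over.OverMorphism.ext
        apply stmt11_aux_fsext
        apply Over.OverMorphism.ext
        simp [ObjectProperty.FullSubcategory.comp_hom, ObjectProperty.FullSubcategory.id_hom] }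
  haveI hΦf : Φ.Faithful := by
    refine ⟨?_⟩
    intro X Y g g' e
    have e1 := congrArg (fun (t : Φ.obj X ⟶ Φ.obj Y) =>
      ((t.left.hom : (Over.map σ).obj (US.obj X) ⟶ (Over.map σ).obj (US.obj Y))).left) e
    have e2 : US.map g = US.map g' := by
      apply Over.OverMorphism.ext
      exact e1
    exact US.map_injective e2
  haveI hΦfull : Φ.Full := by
    refine ⟨?_⟩
    intro X Y ψ
    have hw := Over.w ψ
    have hw' : (ψ.left.hom : (Over.map σ).obj (US.obj X) ⟶ (Over.map σ).obj (US.obj Y)).left ≫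
        (US.obj Y).hom = (US.obj X).hom := by
      have h1 := congrArg
        (fun (t : (⟨(Over.map σ).obj (US.obj X), hsplit X⟩ : ObjectProperty.FullSubcategory pred) ⟶ Sσ) =>
          (t.hom : (Over.map σ).obj (US.obj X) ⟶ Over.mk σ).left) hw
      dsimp only at h1
      exact h1
    refine ⟨US.preimage (Over.homMk
      (ψ.left.hom : (Over.map σ).obj (US.obj X) ⟶ (Over.map σ).obj (US.obj Y)).left hw'), ?_⟩
    apply Over.OverMorphism.ext
    apply stmt11_aux_fsext
    apply Over.OverMorphism.ext
    show ((Over.map σ).map (US.map (US.preimage (Over.homMk ψ.left.hom.left hw')))).left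
      = ψ.left.hom.left
    simp [Functor.map_preimage]
  haveI hΦes : Φ.EssSurj := by
    refine ⟨?_⟩
    intro Z
    have hZw : Z.hom.hom.left ≫ σ = Z.left.obj.hom := by
      exact Over.w (Z.hom.hom : Z.left.obj ⟶ Over.mk σ)
    let B : Over S := Over.mk ((Z.hom.hom : Z.left.obj ⟶ Over.mk σ).left)
    let ι : (Over.map σ).obj B ≅ Z.left.obj :=
      Over.isoMk (Iso.refl _) (by exact (Category.id_comp _).trans hZw.symm)
    have hTB : IsIso (adjS.unit.app ((Over.map σ ⋙ Over.pullback σ).obj B)) :=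
      stmt11_aux_transfer adjS ((Over.pullback σ).mapIso ι.symm) Z.left.property
    haveI := hTB
    have hT2 : IsIso (adjS.unit.app ((Over.map σ ⋙ Over.pullback σ).obj
        ((Over.map σ ⋙ Over.pullback σ).obj B))) := by
      refine stmt11_aux_transfer adjS
        ((Over.map σ ⋙ Over.pullback σ).mapIso
          (asIso (adjS.unit.app ((Over.map σ ⋙ Over.pullback σ).obj B))).symm) (hsplit _)
    have hB : IsIso (adjS.unit.app B) := stmt11_aux_key σ adjS hcounit B hTB hT2
    haveI := hB
    refine ⟨(Over.post F).obj B, ⟨?_⟩⟩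
    refine Over.isoMk
      (ObjectProperty.isoMk _
        ((Over.map σ).mapIso (asIso (adjS.unit.app B)).symm ≪≫ ι)) ?_
    apply stmt11_aux_fsext
    apply Over.OverMorphism.ext
    show (((Over.map σ).map (inv (adjS.unit.app B))).left ≫ 𝟙 _) ≫ Z.hom.hom.left
      = (US.obj ((Over.post F).obj B)).hom
    rw [Category.comp_id]
    exact Over.w (inv (adjS.unit.app B))
  haveI : Φ.IsEquivalence := ⟨hΦf, hΦfull, hΦes⟩
  -- the reflective embedding of `Over (F S)` as the split objects of `Over S`
  let Ψ : Over (F.obj S) ⥤ ObjectProperty.FullSubcategory (fun Bb : Over S => IsIso (adjS.unit.app Bb)) :=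
    ObjectProperty.lift _ US (fun X => stmt11_aux_unit_at_R adjS hcounit X)
  haveI hΨf : Ψ.Faithful := ⟨by intro X Y f g e; exact US.map_injective (congrArg (fun (t : Ψ.obj X ⟶ Ψ.obj Y) => t.hom) e)⟩
  haveI hΨfull : Ψ.Full := ⟨by intro X Y ψ; exact ⟨US.preimage ψ.hom, stmt11_aux_fsext (US.map_preimage ψ.hom)⟩⟩
  haveI hΨes : Ψ.EssSurj := by
    refine ⟨?_⟩
    intro Z
    haveI := Z.property
    exact ⟨(Over.post F).obj Z.obj,
      ⟨ObjectProperty.isoMk _ (asIso (adjS.unit.app Z.obj)).symm⟩⟩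
  haveI : Ψ.IsEquivalence := ⟨hΨf, hΨfull, hΨes⟩
  exact ⟨h, ⟨Φ.asEquivalence.symm.trans Ψ.asEquivalence⟩, ⟨Φ.asEquivalence.symm⟩⟩
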